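/- Randomized Integer-Division hashing h(x₁,…,x_n) = Σᵢ B^{n-i} h₁(xᵢ) mod 2^L is not uniform when n is even and B is odd: specifically, P(h(a,…,a) = 0) ≥ 2^{-(L-1)} > 2^{-L}. -/

import Mathlib

/-- Uniform probability of an event over a finite sample space. -/
noncomputable def prob (Ω : Type*) (p : Ω → Prop) : ℚ :=
  (Nat.card {ω : Ω // p ω} : ℚ) / (Nat.card Ω : ℚ)

/-- Randomized Integer-Division hashing is not uniform for n even, B odd. -/
theorem integer_division_not_uniform_even_n_odd_B
    {σ : Type*} [Fintype σ] (n L B : ℕ) (hn : 0 < n) (hne : Even n)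
    (hB : Odd B) (hL : 1 ≤ L) (a : σ) :
    (1 : ℚ) / 2 ^ (L - 1) ≤
      prob (σ → ZMod (2 ^ L))
        (fun h₁ => (∑ i : Fin n, (B : ZMod (2 ^ L)) ^ (n - 1 - (i : ℕ)) * h₁ a) = 0) ∧
    (1 : ℚ) / 2 ^ L <
      prob (σ → ZMod (2 ^ L))
        (fun h₁ => (∑ i : Fin n, (B : ZMod (2 ^ L)) ^ (n - 1 - (i : ℕ)) * h₁ a) = 0) := by
  classical
  set M := ZMod (2 ^ L) with hM
  haveI : NeZero (2 ^ L) := ⟨by positivity⟩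
  set c : M := ∑ i : Fin n, (B : M) ^ (n - 1 - (i : ℕ)) with hc
  have hev : ∀ h₁ : σ → M,
      ((∑ i : Fin n, (B : M) ^ (n - 1 - (i : ℕ)) * h₁ a) = 0) ↔ c * h₁ a = 0 := by
    intro h₁; rw [hc, Finset.sum_mul]
  -- the natural-number coefficient sum is even
  set N : ℕ := ∑ i : Fin n, B ^ (n - 1 - (i : ℕ)) with hN
  have hNeven : Even N := by
    rw [even_iff_two_dvd, ← ZMod.natCast_eq_zero_iff, hN]
    push_cast
    have hB1 : (B : ZMod 2) = 1 := by
      rw [← ZMod.natCast_mod B 2, Nat.odd_iff.mp hB, Nat.cast_one]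
    simp only [hB1, one_pow, Finset.sum_const, Finset.card_univ, Fintype.card_fin,
      nsmul_eq_mul, mul_one]
    rw [ZMod.natCast_eq_zero_iff, ← even_iff_two_dvd]
    exact hne
  have hcN : c = (N : M) := by rw [hc, hN, Nat.cast_sum]; simp only [Nat.cast_pow]
  -- the element 2^(L-1) is a nonzero solution of c * y = 0
  set y₀ : M := ((2 ^ (L - 1) : ℕ) : M) with hy₀
  have hy₀ne : y₀ ≠ 0 := by
    rw [hy₀, Ne, ZMod.natCast_eq_zero_iff]
    intro hdvd
    have h1 : 2 ^ L ≤ 2 ^ (L - 1) := Nat.le_of_dvd (by positivity) hdvd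
    have h2 : 2 ^ (L - 1) < 2 ^ L := Nat.pow_lt_pow_right one_lt_two (by omega)
    omega
  have hy₀sol : c * y₀ = 0 := by
    obtain ⟨k, hk⟩ := hNeven
    rw [hcN, hy₀, hk, ← Nat.cast_mul, ZMod.natCast_eq_zero_iff]
    have : k + k = 2 * k := by ring
    rw [this]
    calc 2 ^ L = 2 * 2 ^ (L - 1) := by
          rw [← pow_succ']
          congr 1
          omega
      _ ∣ 2 * k * 2 ^ (L - 1) := ⟨k, by ring⟩
  -- counting
  set T := ({ j : σ // j ≠ a } → M) with hT
  have e1 : {h₁ : σ → M // c * h₁ a = 0} ≃ {y : M // c * y = 0} × T :=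
    ((Equiv.funSplitAt a M).subtypeEquiv (fun h₁ => by simp)).trans
      Equiv.prodSubtypeFstEquivSubtypeProd
  have e2 : (σ → M) ≃ M × T := Equiv.funSplitAt a M
  have hS2 : 2 ≤ Nat.card {y : M // c * y = 0} := by
    rw [Nat.card_eq_fintype_card]
    haveI : Nontrivial {y : M // c * y = 0} :=
      ⟨⟨⟨0, by simp⟩, ⟨y₀, hy₀sol⟩, by simp [Subtype.ext_iff, Ne.symm hy₀ne]⟩⟩
    exact Fintype.one_lt_card
  have hTpos : 0 < (Nat.card T : ℚ) := by
    have : 0 < Nat.card T := Nat.card_pos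
    exact_mod_cast this
  have hMcard : (Nat.card M : ℚ) = 2 ^ L := by
    rw [hM, Nat.card_eq_fintype_card, ZMod.card]; push_cast; ring
  have key : prob (σ → M)
      (fun h₁ => (∑ i : Fin n, (B : M) ^ (n - 1 - (i : ℕ)) * h₁ a) = 0)
      = (Nat.card {y : M // c * y = 0} : ℚ) / 2 ^ L := by
    unfold prob
    have hcong : {h₁ : σ → M // (∑ i : Fin n, (B : M) ^ (n - 1 - (i : ℕ)) * h₁ a) = 0}
        ≃ {h₁ : σ → M // c * h₁ a = 0} := Equiv.subtypeEquivRight hev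
    rw [Nat.card_congr (hcong.trans e1), Nat.card_congr e2, Nat.card_prod, Nat.card_prod]
    push_cast
    rw [hMcard]
    field_simp
  constructor
  · rw [key]
    have h2L : (2 : ℚ) ^ L = 2 * 2 ^ (L - 1) := by
      rw [← pow_succ']; congr 1; omega
    rw [h2L, div_le_div_iff₀ (by positivity) (by positivity)]
    have : (2 : ℚ) ≤ (Nat.card {y : M // c * y = 0} : ℚ) := by exact_mod_cast hS2
    nlinarith [pow_pos (by norm_num : (0:ℚ) < 2) (L - 1)]
  · rw [key]
    have h1 : (1 : ℚ) < (Nat.card {y : M // c * y = 0} : ℚ) := by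
      exact_mod_cast lt_of_lt_of_le one_lt_two hS2
    gcongr
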